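/- For all real numbers z0 > 0, A > 0 and B > 0, the double integral ∫_{-A}^{A} ∫_{-B}^{B} (1/(4π)) · z0 / (z0² + x² + y²)^{3/2} dy dx equals (1/π) · arctan( A·B / ( z0 · √(A² + B² + z0²) ) ). -/

import Mathlib

open Real MeasureTheory

private lemma sqrt_deriv (c : ℝ) (hc : 0 < c) (y : ℝ) :
    HasDerivAt (fun t : ℝ => Real.sqrt (c + t ^ 2)) (y / Real.sqrt (c + y ^ 2)) y := by
  have hX : (0:ℝ) < c + y ^ 2 := by positivity
  have h1 : HasDerivAt (fun t : ℝ => c + t ^ 2) (2 * y) y := by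
    simpa using (hasDerivAt_pow 2 y).const_add c
  have h2 := (Real.hasDerivAt_sqrt hX.ne').comp y h1
  refine h2.congr_deriv ?_
  have hs : Real.sqrt (c + y ^ 2) ≠ 0 := by positivity
  field_simp

private lemma inner_deriv (c : ℝ) (hc : 0 < c) (y : ℝ) :
    HasDerivAt (fun t : ℝ => t / (c * Real.sqrt (c + t ^ 2)))
      (1 / ((c + y ^ 2) * Real.sqrt (c + y ^ 2))) y := by
  have hX : (0:ℝ) < c + y ^ 2 := by positivity
  have hs : (0:ℝ) < Real.sqrt (c + y ^ 2) := Real.sqrt_pos.2 hX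
  have hden : HasDerivAt (fun t : ℝ => c * Real.sqrt (c + t ^ 2))
      (c * (y / Real.sqrt (c + y ^ 2))) y := (sqrt_deriv c hc y).const_mul c
  have h := (hasDerivAt_id y).div hden (by positivity)
  refine h.congr_deriv ?_
  have hsq : Real.sqrt (c + y ^ 2) ^ 2 = c + y ^ 2 := Real.sq_sqrt hX.le
  simp only [id]
  field_simp
  linear_combination y ^ 2 * hsq

private lemma outer_deriv (z0 B : ℝ) (hz0 : 0 < z0) (hB : 0 < B) (x : ℝ) :
    HasDerivAt (fun t : ℝ => Real.arctan (B * t / (z0 * Real.sqrt (z0 ^ 2 + B ^ 2 + t ^ 2))))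
      (B * z0 / ((z0 ^ 2 + x ^ 2) * Real.sqrt (z0 ^ 2 + B ^ 2 + x ^ 2))) x := by
  set s : ℝ := z0 ^ 2 + B ^ 2 with hs_def
  have hsp : (0:ℝ) < s := by positivity
  have hX : (0:ℝ) < s + x ^ 2 := by positivity
  have hsq : (0:ℝ) < Real.sqrt (s + x ^ 2) := Real.sqrt_pos.2 hX
  have hsqsq : Real.sqrt (s + x ^ 2) ^ 2 = s + x ^ 2 := Real.sq_sqrt hX.le
  have hnum : HasDerivAt (fun t : ℝ => B * t) B x := by
    simpa using (hasDerivAt_id x).const_mul B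
  have hden : HasDerivAt (fun t : ℝ => z0 * Real.sqrt (s + t ^ 2))
      (z0 * (x / Real.sqrt (s + x ^ 2))) x := (sqrt_deriv s hsp x).const_mul z0
  have hu : HasDerivAt (fun t : ℝ => B * t / (z0 * Real.sqrt (s + t ^ 2)))
      ((B * (z0 * Real.sqrt (s + x ^ 2)) - B * x * (z0 * (x / Real.sqrt (s + x ^ 2)))) /
        (z0 * Real.sqrt (s + x ^ 2)) ^ 2) x := hnum.div hden (by positivity)
  have h := hu.arctan
  convert h using 1
  field_simp
  linear_combination (-x ^ 2) * hsqsq + (-x ^ 2) * hs_def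

/-- Fraction of isotropically radiated power from a point at distance `z0` received by
the rectangular surface `[-A,A] × [-B,B]` at `z = 0` (Eqs. (6)–(7) of the paper). -/
theorem received_power_rectangle (z0 A B : ℝ) (hz0 : 0 < z0) (hA : 0 < A) (hB : 0 < B) :
    (∫ x in (-A)..A, ∫ y in (-B)..B,
        (1 / (4 * π)) * z0 / (z0 ^ 2 + x ^ 2 + y ^ 2) ^ ((3 : ℝ) / 2))
      = (1 / π) * Real.arctan (A * B / (z0 * Real.sqrt (A ^ 2 + B ^ 2 + z0 ^ 2))) := by
  have hπ : (0:ℝ) < π := Real.pi_pos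
  -- step 1: inner integral
  have inner_eq : ∀ x : ℝ,
      (∫ y in (-B)..B, (1 / (4 * π)) * z0 / (z0 ^ 2 + x ^ 2 + y ^ 2) ^ ((3 : ℝ) / 2))
        = (1 / (2 * π)) * (B * z0 / ((z0 ^ 2 + x ^ 2) *
            Real.sqrt (z0 ^ 2 + B ^ 2 + x ^ 2))) := by
    intro x
    set c : ℝ := z0 ^ 2 + x ^ 2 with hc_def
    have hc : (0:ℝ) < c := by positivity
    have hrw : ∀ y : ℝ, (1 / (4 * π)) * z0 / (z0 ^ 2 + x ^ 2 + y ^ 2) ^ ((3 : ℝ) / 2)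
        = (1 / (4 * π) * z0) * (1 / ((c + y ^ 2) * Real.sqrt (c + y ^ 2))) := by
      intro y
      have hX : (0:ℝ) < c + y ^ 2 := by positivity
      have h32 : (c + y ^ 2) ^ ((3:ℝ)/2) = (c + y ^ 2) * Real.sqrt (c + y ^ 2) := by
        rw [show ((3:ℝ)/2) = 1 + 1/2 by norm_num, Real.rpow_add hX, Real.rpow_one,
          Real.sqrt_eq_rpow]
      have : z0 ^ 2 + x ^ 2 + y ^ 2 = c + y ^ 2 := by rw [hc_def]
      rw [this, h32]
      ring
    rw [intervalIntegral.integral_congr (fun y _ => hrw y),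
      intervalIntegral.integral_const_mul]
    have key : (∫ y in (-B)..B, 1 / ((c + y ^ 2) * Real.sqrt (c + y ^ 2)))
        = B / (c * Real.sqrt (c + B ^ 2)) - (-B) / (c * Real.sqrt (c + (-B) ^ 2)) := by
      apply intervalIntegral.integral_eq_sub_of_hasDerivAt
      · intro y _; exact inner_deriv c hc y
      · apply Continuous.intervalIntegrable
        apply Continuous.div continuous_const
        · fun_prop
        · intro y
          have hX : (0:ℝ) < c + y ^ 2 := by positivity
          have := Real.sqrt_pos.2 hX
          positivity
    rw [key]
    have hB2 : (-B) ^ 2 = B ^ 2 := by ring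
    rw [hB2]
    have harg : z0 ^ 2 + B ^ 2 + x ^ 2 = c + B ^ 2 := by rw [hc_def]; ring
    rw [harg]
    have hX : (0:ℝ) < c + B ^ 2 := by positivity
    have hsq : (0:ℝ) < Real.sqrt (c + B ^ 2) := Real.sqrt_pos.2 hX
    field_simp
    ring
  rw [intervalIntegral.integral_congr (fun x _ => inner_eq x),
    intervalIntegral.integral_const_mul]
  have key : (∫ x in (-A)..A, B * z0 / ((z0 ^ 2 + x ^ 2) * Real.sqrt (z0 ^ 2 + B ^ 2 + x ^ 2)))
      = Real.arctan (B * A / (z0 * Real.sqrt (z0 ^ 2 + B ^ 2 + A ^ 2)))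
        - Real.arctan (B * (-A) / (z0 * Real.sqrt (z0 ^ 2 + B ^ 2 + (-A) ^ 2))) := by
    apply intervalIntegral.integral_eq_sub_of_hasDerivAt
    · intro x _
      have h := outer_deriv z0 B hz0 hB x
      convert h using 2
    · apply Continuous.intervalIntegrable
      apply Continuous.div continuous_const
      · fun_prop
      · intro x
        have hX : (0:ℝ) < z0 ^ 2 + B ^ 2 + x ^ 2 := by positivity
        have := Real.sqrt_pos.2 hX
        have : (0:ℝ) < z0 ^ 2 + x ^ 2 := by positivity
        positivity
  rw [key]
  have hA2 : (-A) ^ 2 = A ^ 2 := by ring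
  rw [hA2]
  have hodd : B * (-A) / (z0 * Real.sqrt (z0 ^ 2 + B ^ 2 + A ^ 2))
      = -(B * A / (z0 * Real.sqrt (z0 ^ 2 + B ^ 2 + A ^ 2))) := by ring
  rw [hodd, Real.arctan_neg]
  have harg : z0 ^ 2 + B ^ 2 + A ^ 2 = A ^ 2 + B ^ 2 + z0 ^ 2 := by ring
  have harg2 : B * A = A * B := by ring
  rw [harg, harg2]
  field_simp
  ring
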